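/- Let Γ be a graph in [l] with n = |E₁(Γ)| + |E₂(Γ)| edges whose graphic arrangement A(Γ) has rank at least 3. If n is not divisible by 3, then β_3(Γ) = 0; equivalently, every 3-cocycle η : A(Γ) → 𝔽_3 is constant on A(Γ). -/

import Mathlib

open scoped Classical

noncomputable section

/-- A (candidate) hyperplane in `ℂ^l`: a submodule of `Fin l → ℂ`. -/
abbrev Hyp (l : ℕ) := Submodule ℂ (Fin l → ℂ)

/-- `X` is a rank-2 flat of the central arrangement `A`. -/
def IsRank2Flat {l : ℕ} (A : Finset (Hyp l)) (X : Hyp l) : Prop :=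
  ∃ H ∈ A, ∃ K ∈ A, H ≠ K ∧ X = H ⊓ K

/-- The hyperplanes of `A` containing the flat `X` (so `m_X = (flatHyps A X).card`). -/
def flatHyps {l : ℕ} (A : Finset (Hyp l)) (X : Hyp l) : Finset {H // H ∈ A} :=
  A.attach.filter fun L => X ≤ (L : Hyp l)

/-- `η : A → 𝔽_p` is a `p`-cocycle: for every rank-2 flat `X`, the sum of `η` over `A_X`
vanishes when `p ∣ m_X`, and `η` is constant on `A_X` when `p ∤ m_X`. -/
def IsCocycle {l : ℕ} (p : ℕ) (A : Finset (Hyp l)) (η : {H // H ∈ A} → ZMod p) : Prop :=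
  ∀ X : Hyp l, IsRank2Flat A X →
    ((p ∣ (flatHyps A X).card → ∑ L ∈ flatHyps A X, η L = 0) ∧
     (¬ p ∣ (flatHyps A X).card →
       ∀ H ∈ flatHyps A X, ∀ K ∈ flatHyps A X, η H = η K))

/-- The rank of a central arrangement in `ℂ^l`: the codimension of the intersection of
all its hyperplanes. -/
def arrRank {l : ℕ} (A : Finset (Hyp l)) : ℕ :=
  l - Module.finrank ℂ ↥(A.inf id)

/-- A graph `Γ` in `[l]`: loops `E₁(Γ) ⊆ [l]`, and signed edges `ij^ε` (recorded with
`i < j`, the sign `ε` encoded by a `Bool`: `true ↦ +1`, `false ↦ -1`); a pair `{i,j}`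
may carry one signed edge (a simple edge) or both (a double edge). -/
structure SGraph (l : ℕ) where
  loops : Finset (Fin l)
  edges : Finset (Fin l × Fin l × Bool)
  edges_lt : ∀ e ∈ edges, e.1 < e.2.1

/-- The hyperplane `x_i = 0` of a loop at `i`. -/
def loopHyp {l : ℕ} (i : Fin l) : Hyp l :=
  LinearMap.ker (LinearMap.proj i : (Fin l → ℂ) →ₗ[ℂ] ℂ)

/-- The hyperplane `x_i + ε·x_j = 0` of a signed edge `ij^ε`. -/
def edgeHyp {l : ℕ} (i j : Fin l) (b : Bool) : Hyp l :=
  LinearMap.ker ((LinearMap.proj i : (Fin l → ℂ) →ₗ[ℂ] ℂ)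
    + (if b then (1 : ℂ) else -1) • (LinearMap.proj j : (Fin l → ℂ) →ₗ[ℂ] ℂ))

/-- The graphic arrangement `A(Γ)` in `ℂ^l`. -/
def graphArr {l : ℕ} (G : SGraph l) : Finset (Hyp l) :=
  G.loops.image loopHyp ∪ G.edges.image fun e => edgeHyp e.1 e.2.1 e.2.2

/-- The (unordered) signed edge `ij^ε` belongs to `Γ`. -/
def SGraph.hasEdge {l : ℕ} (G : SGraph l) (i j : Fin l) (b : Bool) : Prop :=
  (i, j, b) ∈ G.edges ∨ (j, i, b) ∈ G.edges


section AuxBeta3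
variable {l : ℕ}

lemma mem_loopHyp {x : Fin l → ℂ} {i : Fin l} : x ∈ loopHyp i ↔ x i = 0 := by
  simp [loopHyp, LinearMap.mem_ker]

lemma mem_edgeHyp {x : Fin l → ℂ} {i j : Fin l} {b : Bool} :
    x ∈ edgeHyp i j b ↔ x i + (if b then (1:ℂ) else -1) * x j = 0 := by
  cases b <;> simp [edgeHyp, LinearMap.mem_ker, neg_one_mul]

lemma eps_ne_zero (b : Bool) : (if b then (1:ℂ) else -1) ≠ 0 := by cases b <;> norm_num

lemma single_mem_edgeHyp {t i j : Fin l} {b : Bool} (h1 : t ≠ i) (h2 : t ≠ j) :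
    Pi.single t (1:ℂ) ∈ edgeHyp i j b := by
  rw [mem_edgeHyp, Pi.single_eq_of_ne (Ne.symm h1), Pi.single_eq_of_ne (Ne.symm h2)]
  ring

lemma single_not_mem_edgeHyp {t i j : Fin l} {b : Bool} (hij : i ≠ j) (h : t = i ∨ t = j) :
    Pi.single t (1:ℂ) ∉ edgeHyp i j b := by
  rw [mem_edgeHyp]
  rcases h with h | h <;> subst h
  · rw [Pi.single_eq_same, Pi.single_eq_of_ne (Ne.symm hij)]
    norm_num
  · rw [Pi.single_eq_same, Pi.single_eq_of_ne hij]
    simpa using eps_ne_zero b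


lemma single_mem_loopHyp {t i : Fin l} (h : t ≠ i) : Pi.single t (1:ℂ) ∈ loopHyp i := by
  rw [mem_loopHyp, Pi.single_eq_of_ne (Ne.symm h)]

lemma single_not_mem_loopHyp {i : Fin l} : Pi.single i (1:ℂ) ∉ loopHyp i := by
  rw [mem_loopHyp, Pi.single_eq_same]; norm_num

lemma loopHyp_injective {i j : Fin l} (h : loopHyp i = loopHyp j) : i = j := by
  by_contra hne
  exact single_not_mem_loopHyp (h ▸ single_mem_loopHyp (Ne.symm hne))

lemma loopHyp_ne_edgeHyp {i i' j' : Fin l} {b' : Bool} (hij : i' ≠ j') :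
    loopHyp i ≠ edgeHyp i' j' b' := by
  intro h
  by_cases h1 : i = i'
  · subst h1
    have hm : Pi.single j' (1:ℂ) ∈ loopHyp i := single_mem_loopHyp (Ne.symm hij)
    rw [h] at hm
    exact single_not_mem_edgeHyp hij (Or.inr rfl) hm
  · by_cases h2 : i = j'
    · subst h2
      have hm : Pi.single i' (1:ℂ) ∈ loopHyp i := single_mem_loopHyp hij
      rw [h] at hm
      exact single_not_mem_edgeHyp hij (Or.inl rfl) hm
    · have hm : Pi.single i (1:ℂ) ∈ edgeHyp i' j' b' :=
        single_mem_edgeHyp h1 h2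
      rw [← h] at hm
      exact single_not_mem_loopHyp hm

lemma edgeHyp_inj {i j i' j' : Fin l} {b b' : Bool} (hij : i < j) (hij' : i' < j')
    (h : edgeHyp i j b = edgeHyp i' j' b') : i = i' ∧ j = j' ∧ b = b' := by
  -- supports coincide
  have key : ∀ t : Fin l, (t = i ∨ t = j) → (t = i' ∨ t = j') := by
    intro t ht
    by_contra hc
    push_neg at hc
    have hm : Pi.single t (1:ℂ) ∈ edgeHyp i' j' b' := single_mem_edgeHyp hc.1 hc.2
    rw [← h] at hm
    exact single_not_mem_edgeHyp hij.ne ht hm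
  have key' : ∀ t : Fin l, (t = i' ∨ t = j') → (t = i ∨ t = j) := by
    intro t ht
    by_contra hc
    push_neg at hc
    have hm : Pi.single t (1:ℂ) ∈ edgeHyp i j b := single_mem_edgeHyp hc.1 hc.2
    rw [h] at hm
    exact single_not_mem_edgeHyp hij'.ne ht hm
  have hii : i = i' ∧ j = j' := by
    have k1 : (i:ℕ) = i' ∨ (i:ℕ) = j' :=
      (key i (Or.inl rfl)).imp (congrArg Fin.val) (congrArg Fin.val)
    have k2 : (j:ℕ) = i' ∨ (j:ℕ) = j' :=
      (key j (Or.inr rfl)).imp (congrArg Fin.val) (congrArg Fin.val)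
    have k3 : (i':ℕ) = i ∨ (i':ℕ) = j :=
      (key' i' (Or.inl rfl)).imp (congrArg Fin.val) (congrArg Fin.val)
    have k4 : (j':ℕ) = i ∨ (j':ℕ) = j :=
      (key' j' (Or.inr rfl)).imp (congrArg Fin.val) (congrArg Fin.val)
    have hiv : (i:ℕ) < j := hij
    have hiv' : (i':ℕ) < j' := hij'
    exact ⟨Fin.ext (by omega), Fin.ext (by omega)⟩
  obtain ⟨h1, h2⟩ := hii
  subst h1; subst h2
  refine ⟨rfl, rfl, ?_⟩
  by_contra hb
  -- signs differ; exhibit distinguishing vector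
  set ε : ℂ := if b then 1 else -1 with hε
  set ε' : ℂ := if b' then 1 else -1 with hε'
  have hεε : ε ≠ ε' := by
    rcases b <;> rcases b' <;> simp_all [hε, hε'] <;> norm_num
  have hm : (Pi.single i (-ε) + Pi.single j (1:ℂ)) ∈ edgeHyp i j b := by
    rw [mem_edgeHyp]
    simp [Pi.single_eq_same, Pi.single_eq_of_ne hij.ne, Pi.single_eq_of_ne hij.ne',
      Pi.single_eq_of_ne (Ne.symm hij.ne)]
    rw [hε]; ring
  rw [h] at hm
  rw [mem_edgeHyp] at hm
  simp [Pi.single_eq_same, Pi.single_eq_of_ne hij.ne, Pi.single_eq_of_ne hij.ne',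
    Pi.single_eq_of_ne (Ne.symm hij.ne)] at hm
  apply hεε
  rw [← hε'] at hm
  linear_combination -hm


lemma graphArr_card (G : SGraph l) :
    (graphArr G).card = G.loops.card + G.edges.card := by
  rw [graphArr, Finset.card_union_of_disjoint, Finset.card_image_of_injOn,
    Finset.card_image_of_injOn]
  · intro e he e' he' h
    obtain ⟨h1, h2, h3⟩ := edgeHyp_inj (G.edges_lt e he) (G.edges_lt e' he') h
    exact Prod.ext h1 (Prod.ext h2 h3)
  · intro i _ j _ h
    exact loopHyp_injective h
  · rw [Finset.disjoint_left]
    rintro H hH hH'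
    obtain ⟨i, _, rfl⟩ := Finset.mem_image.1 hH
    obtain ⟨e, he, heq⟩ := Finset.mem_image.1 hH'
    exact loopHyp_ne_edgeHyp (G.edges_lt e he).ne heq.symm

lemma hyp_facts {G : SGraph l} {H : Hyp l} (hH : H ∈ graphArr G) :
    IsCoatom H ∧ Module.finrank ℂ H + 1 = l := by
  haveI : IsSimpleModule ℂ ℂ := inferInstance
  have main : ∀ f : (Fin l → ℂ) →ₗ[ℂ] ℂ, Function.Surjective f →
      IsCoatom (LinearMap.ker f) ∧ Module.finrank ℂ (LinearMap.ker f) + 1 = l := by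
    intro f hf
    refine ⟨LinearMap.isCoatom_ker_of_surjective hf, ?_⟩
    have h1 := LinearMap.finrank_range_add_finrank_ker f
    rw [LinearMap.range_eq_top.2 hf, finrank_top, Module.finrank_self,
      Module.finrank_fin_fun] at h1
    omega
  rcases Finset.mem_union.1 hH with hH | hH
  · obtain ⟨i, _, rfl⟩ := Finset.mem_image.1 hH
    refine main _ fun c => ⟨Pi.single i c, ?_⟩
    simp [LinearMap.proj_apply]
  · obtain ⟨e, he, rfl⟩ := Finset.mem_image.1 hH
    have hij := (G.edges_lt e he).ne
    obtain ⟨i, j, b⟩ := e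
    refine main _ fun c => ⟨Pi.single i c, ?_⟩
    have hji : j ≠ i := Ne.symm hij
    cases b <;> simp [LinearMap.proj_apply, Pi.single_eq_of_ne hji]


lemma inf_finrank {H K : Hyp l} (hH : IsCoatom H ∧ Module.finrank ℂ H + 1 = l)
    (hK : IsCoatom K ∧ Module.finrank ℂ K + 1 = l) (hne : H ≠ K) :
    Module.finrank ℂ ↥(H ⊓ K) + 2 = l := by
  have hle : ¬ K ≤ H := by
    intro h
    rcases lt_or_eq_of_le h with h | h
    · exact hH.1.1 (hK.1.2 _ h)
    · exact hne h.symm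
  have hsup : H ⊔ K = ⊤ := by
    apply hH.1.2
    exact lt_of_le_of_ne le_sup_left fun h => hle (h ▸ le_sup_right)
  have h2 := Submodule.finrank_sup_add_finrank_inf_eq H K
  rw [hsup, finrank_top, Module.finrank_fin_fun] at h2
  omega


lemma dvd_card_of_nonconst {A : Finset (Hyp l)}
    (hfacts : ∀ H ∈ A, IsCoatom H ∧ Module.finrank ℂ H + 1 = l)
    (η : {H // H ∈ A} → ZMod 3) (hη : IsCocycle 3 A η)
    (H₀ K₀ : {H // H ∈ A}) (hne : η H₀ ≠ η K₀) : 3 ∣ A.card := by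
  have hflat_eq : ∀ K H H' : {H // H ∈ A}, H.1 ≠ K.1 → H'.1 ≠ K.1 →
      K.1 ⊓ H.1 ≤ H'.1 → K.1 ⊓ H'.1 = K.1 ⊓ H.1 := by
    intro K H H' h1 h2 hle
    have e1 := inf_finrank (hfacts _ K.2) (hfacts _ H.2) (Ne.symm h1)
    have e2 := inf_finrank (hfacts _ K.2) (hfacts _ H'.2) (Ne.symm h2)
    exact (Submodule.eq_of_le_of_finrank_le (le_inf inf_le_left hle) (by omega)).symm
  have club : ∀ (K : {H // H ∈ A}) (X : Hyp l), IsRank2Flat A X → X ≤ K.1 →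
      ∀ a b : ZMod 3, a ≠ η K → b ≠ η K →
      ((((flatHyps A X).filter fun H => η H = a).card : ZMod 3) =
        (((flatHyps A X).filter fun H => η H = b).card : ZMod 3)) := by
    intro K X hXflat hXK a b ha hb
    obtain ⟨hsum, hconst⟩ := hη X hXflat
    by_cases hdvd : 3 ∣ (flatHyps A X).card
    · have key : ∀ g : ZMod 3 → ZMod 3, (∑ c, g c = 0) → (∑ c, g c * c = 0) →
          ∀ a b : ZMod 3, g a = g b := by decide
      apply key (fun c => (((flatHyps A X).filter fun H => η H = c).card : ZMod 3))
      · have h1 : (flatHyps A X).card =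
            ∑ c : ZMod 3, ((flatHyps A X).filter fun H => η H = c).card :=
          Finset.card_eq_sum_card_fiberwise fun H _ => Finset.mem_univ (η H)
        have h2 : ((flatHyps A X).card : ZMod 3) = 0 :=
          (ZMod.natCast_eq_zero_iff _ 3).2 hdvd
        rw [h1] at h2
        push_cast at h2
        exact h2
      · have h3 : ∑ c : ZMod 3, ∑ H ∈ (flatHyps A X).filter fun H => η H = c, η H
            = ∑ H ∈ flatHyps A X, η H :=
          Finset.sum_fiberwise_of_maps_to (fun H _ => Finset.mem_univ (η H)) η
        have h4 : ∀ c : ZMod 3,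
            (∑ H ∈ (flatHyps A X).filter fun H => η H = c, η H)
              = (((flatHyps A X).filter fun H => η H = c).card : ZMod 3) * c := by
          intro c
          rw [Finset.sum_congr rfl fun H hH => (Finset.mem_filter.1 hH).2,
            Finset.sum_const, nsmul_eq_mul]
        calc ∑ c : ZMod 3, (((flatHyps A X).filter fun H => η H = c).card : ZMod 3) * c
            = ∑ c : ZMod 3, ∑ H ∈ (flatHyps A X).filter fun H => η H = c, η H :=
              Finset.sum_congr rfl fun c _ => (h4 c).symm
          _ = ∑ H ∈ flatHyps A X, η H := h3
          _ = 0 := hsum hdvd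
    · have hKmem : K ∈ flatHyps A X := Finset.mem_filter.2 ⟨Finset.mem_attach _ _, hXK⟩
      have hempty : ∀ c : ZMod 3, c ≠ η K →
          (flatHyps A X).filter (fun H => η H = c) = ∅ := by
        intro c hc
        apply Finset.filter_eq_empty_iff.2
        intro H hH hc'
        exact hc (hc' ▸ hconst hdvd H hH K hKmem)
      rw [hempty a ha, hempty b hb]
  have pivot : ∀ (K : {H // H ∈ A}) (a b : ZMod 3), a ≠ η K → b ≠ η K →
      (((Finset.univ.filter fun H => η H = a).card : ZMod 3) =
        ((Finset.univ.filter fun H => η H = b).card : ZMod 3)) := by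
    intro K a b ha hb
    have hmapsa : ∀ H ∈ Finset.univ.filter fun H => η H = a,
        K.1 ⊓ H.1 ∈ (((Finset.univ.filter fun H => η H = a) ∪
          (Finset.univ.filter fun H => η H = b)).image fun H => K.1 ⊓ H.1) := fun H h =>
      Finset.mem_image_of_mem _ (Finset.mem_union_left _ h)
    have hmapsb : ∀ H ∈ Finset.univ.filter fun H => η H = b,
        K.1 ⊓ H.1 ∈ (((Finset.univ.filter fun H => η H = a) ∪
          (Finset.univ.filter fun H => η H = b)).image fun H => K.1 ⊓ H.1) := fun H h =>
      Finset.mem_image_of_mem _ (Finset.mem_union_right _ h)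
    rw [Finset.card_eq_sum_card_fiberwise hmapsa, Finset.card_eq_sum_card_fiberwise hmapsb]
    push_cast
    apply Finset.sum_congr rfl
    intro X hX
    obtain ⟨H₁, hH₁, hFH₁⟩ := Finset.mem_image.1 hX
    have hH₁ab : η H₁ = a ∨ η H₁ = b := by
      rcases Finset.mem_union.1 hH₁ with h | h
      · exact Or.inl (Finset.mem_filter.1 h).2
      · exact Or.inr (Finset.mem_filter.1 h).2
    have hH₁K : H₁.1 ≠ K.1 := by
      intro h
      have hKeq : η H₁ = η K := congrArg η (Subtype.ext h)
      rcases hH₁ab with h' | h'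
      · exact ha (h' ▸ hKeq)
      · exact hb (h' ▸ hKeq)
    have hXflat : IsRank2Flat A X :=
      ⟨K.1, K.2, H₁.1, H₁.2, Ne.symm hH₁K, hFH₁.symm⟩
    have hXK : X ≤ K.1 := hFH₁ ▸ inf_le_left
    have hfilter : ∀ c : ZMod 3, c ≠ η K →
        ((Finset.univ.filter fun H => η H = c).filter (fun H => K.1 ⊓ H.1 = X)
          = (flatHyps A X).filter fun H => η H = c) := by
      intro c hc
      ext H
      simp only [flatHyps, Finset.mem_filter, Finset.mem_univ, Finset.mem_attach, true_and]
      constructor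
      · rintro ⟨hc', hFH⟩
        exact ⟨hFH ▸ inf_le_right, hc'⟩
      · rintro ⟨hleX, hc'⟩
        have hHK : H.1 ≠ K.1 := by
          intro h
          have hKeq : η H = η K := congrArg η (Subtype.ext h)
          exact hc (hc' ▸ hKeq)
        refine ⟨hc', ?_⟩
        have hle' : K.1 ⊓ H₁.1 ≤ H.1 := le_trans (le_of_eq hFH₁) hleX
        rw [← hFH₁]
        exact hflat_eq K H₁ H hH₁K hHK hle'
    rw [hfilter a ha, hfilter b hb]
    exact club K X hXflat hXK a b ha hb
  have all_eq : ∀ a b : ZMod 3,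
      (((Finset.univ.filter fun H => η H = a).card : ZMod 3) =
        ((Finset.univ.filter fun H => η H = b).card : ZMod 3)) := by
    intro a b
    by_cases hK : ∃ K : {H // H ∈ A}, η K ≠ a ∧ η K ≠ b
    · obtain ⟨K, h1, h2⟩ := hK
      exact pivot K a b (Ne.symm h1) (Ne.symm h2)
    · push_neg at hK
      have hval : ∀ K : {H // H ∈ A}, η K = a ∨ η K = b := by
        intro K
        by_cases h : η K = a
        · exact Or.inl h
        · exact Or.inr (hK K h)
      have hab : a ≠ b := by
        intro h
        apply hne
        rcases hval H₀ with h0 | h0 <;> rcases hval K₀ with h1 | h1 <;>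
          rw [h0, h1] <;> rw [h]
      have third : ∀ a b : ZMod 3, a ≠ b → ∃ w, w ≠ a ∧ w ≠ b := by decide
      obtain ⟨w, hwa, hwb⟩ := third a b hab
      have hTw : (Finset.univ.filter fun H : {H // H ∈ A} => η H = w).card = 0 := by
        rw [Finset.card_eq_zero]
        apply Finset.filter_eq_empty_iff.2
        intro H _
        rcases hval H with h | h <;> rw [h]
        · exact Ne.symm hwa
        · exact Ne.symm hwb
      have hKa : ∃ Ka : {H // H ∈ A}, η Ka = a := by
        rcases hval H₀ with h | h
        · exact ⟨H₀, h⟩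
        · rcases hval K₀ with h' | h'
          · exact ⟨K₀, h'⟩
          · exact absurd (h.trans h'.symm) hne
      have hKb : ∃ Kb : {H // H ∈ A}, η Kb = b := by
        rcases hval H₀ with h | h
        · rcases hval K₀ with h' | h'
          · exact absurd (h.trans h'.symm) hne
          · exact ⟨K₀, h'⟩
        · exact ⟨H₀, h⟩
      obtain ⟨Ka, hKva⟩ := hKa
      obtain ⟨Kb, hKvb⟩ := hKb
      have e1 : ((Finset.univ.filter fun H => η H = b).card : ZMod 3) =
          ((Finset.univ.filter fun H => η H = w).card : ZMod 3) :=
        pivot Ka b w (fun h => hab ((h.trans hKva).symm ▸ rfl))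
          (fun h => hwa (h.trans hKva))
      have e2 : ((Finset.univ.filter fun H => η H = a).card : ZMod 3) =
          ((Finset.univ.filter fun H => η H = w).card : ZMod 3) :=
        pivot Kb a w (fun h => hab (h.trans hKvb))
          (fun h => hwb (h.trans hKvb))
      rw [e1, e2]
  have hcard : ((A.card : ℕ) : ZMod 3) = 0 := by
    have h1 : (Finset.univ : Finset {H // H ∈ A}).card =
        ∑ c : ZMod 3, (Finset.univ.filter fun H => η H = c).card :=
      Finset.card_eq_sum_card_fiberwise fun H _ => Finset.mem_univ (η H)
    have h2 : ((A.card : ℕ) : ZMod 3) =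
        ∑ c : ZMod 3, ((Finset.univ.filter fun H : {H // H ∈ A} => η H = c).card : ZMod 3) := by
      rw [← Fintype.card_coe A, ← Finset.card_univ, h1]
      push_cast
      rfl
    rw [h2]
    have h3 : ∑ c : ZMod 3, ((Finset.univ.filter fun H : {H // H ∈ A} => η H = c).card : ZMod 3)
        = ∑ _c : ZMod 3,
            ((Finset.univ.filter fun H : {H // H ∈ A} => η H = 0).card : ZMod 3) :=
      Finset.sum_congr rfl fun c _ => all_eq c 0
    rw [h3, Finset.sum_const, Finset.card_univ, ZMod.card, nsmul_eq_mul,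
      show ((3:ℕ) : ZMod 3) = 0 from ZMod.natCast_self 3, zero_mul]
  exact (ZMod.natCast_eq_zero_iff _ 3).1 hcard

end AuxBeta3

/-- Let `Γ` be a graph in `[l]` with `n = |E₁(Γ)| + |E₂(Γ)|` edges whose graphic
arrangement `A(Γ)` has rank at least 3. If `3 ∤ n`, then every 3-cocycle
`η : A(Γ) → 𝔽₃` is constant on `A(Γ)`; that is, `β₃(Γ) = 0`. -/
theorem beta3_vanishes_of_not_dvd {l : ℕ} (G : SGraph l)
    (hrk : 3 ≤ arrRank (graphArr G))
    (hn : ¬ (3 ∣ (G.loops.card + G.edges.card)))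
    (η : {H // H ∈ graphArr G} → ZMod 3) (hη : IsCocycle 3 (graphArr G) η) :
    ∀ H K : {H // H ∈ graphArr G}, η H = η K := by
  intro H K
  by_contra hne
  apply hn
  rw [← graphArr_card G]
  exact dvd_card_of_nonconst (fun H hH => hyp_facts hH) η hη H K hne
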